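/- arXiv:2502.05962 — 3 statements merged into one kernel-verified Lean document; each statement's English description precedes it below -/
import Mathlib

section
/- The function Φ(x,y) = (1/π)·arctan(x/(y+1)) + 1/2 satisfies the boundary condition ∂_y Φ(x,0) = -(1/(2π))·sin(2π(Φ(x,0) - 1/2)) for all x ∈ ℝ. -/
open Real

/-- The explicit layer solution. -/
noncomputable def Phi (x y : ℝ) : ℝ := (1 / π) * arctan (x / (y + 1)) + 1 / 2

lemma sin_two_arctan (x : ℝ) : Real.sin (2 * arctan x) = 2 * x / (1 + x ^ 2) := by
  rw [Real.sin_two_mul, Real.sin_arctan, Real.cos_arctan]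
  have h : (0:ℝ) < 1 + x ^ 2 := by positivity
  have hh : √(1+x^2) * √(1+x^2) = 1+x^2 := Real.mul_self_sqrt h.le
  have hs : √(1+x^2) ≠ 0 := by positivity
  field_simp
  rw [Real.sq_sqrt h.le]

/-- `Φ` satisfies the boundary condition `∂_y Φ(x,0) = W'(Φ(x,0))` with
`W'(u) = -(1/(2π))·sin(2π(u - 1/2))`. -/
theorem stmt_1 :
    ∀ x : ℝ,
      deriv (fun y => Phi x y) 0
        = -(1 / (2 * π)) * Real.sin (2 * π * (Phi x 0 - 1 / 2)) := by
  intro x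
  have hπ : (π:ℝ) ≠ 0 := Real.pi_ne_zero
  have hg : HasDerivAt (fun y : ℝ => x / (y + 1)) (-x) 0 := by
    have h1 : HasDerivAt (fun y : ℝ => y + 1) 1 0 := (hasDerivAt_id 0).add_const 1
    have := (hasDerivAt_const (0:ℝ) x).div h1 (by norm_num)
    simp at this
    exact this
  have ha : HasDerivAt (fun y : ℝ => Real.arctan (x / (y + 1)))
      (1 / (1 + (x / (0 + 1)) ^ 2) * (-x)) 0 :=
    by have := (Real.hasDerivAt_arctan (x / (0 + 1))).comp 0 hg; exact this
  have hΦ : HasDerivAt (fun y => Phi x y) ((1 / π) * (1 / (1 + x ^ 2) * (-x))) 0 := by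
    have := ((ha.const_mul (1 / π)).add_const (1 / 2 : ℝ))
    simpa [Phi] using this
  rw [hΦ.deriv]
  have hΦ0 : Phi x 0 - 1 / 2 = (1 / π) * arctan x := by simp [Phi]
  rw [hΦ0]
  have : 2 * π * ((1 / π) * arctan x) = 2 * arctan x := by field_simp
  rw [this, sin_two_arctan]
  have h : (1:ℝ) + x ^ 2 ≠ 0 := by positivity
  field_simp
end

section
/- Let φ : ℝ × [0,∞) → ℝ be harmonic in the upper half-plane, bounded, with boundary values satisfying 0 ≤ φ(x,0) ≤ 1 and |φ(x,0) - H(x)| ≤ C·ε/|x| for |x| ≥ √ε (H the Heaviside function). Then, writing φ via the Poisson kernel, for every y > 0 and ε > 0: φ(x/ε, y/ε) ≤ (1/π)·(π/2 + arctan((x + √ε)/y)) + C'·√ε for some constant C' depending only on C. -/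
open Real MeasureTheory

/-- The Heaviside function. -/
noncomputable def Heav (x : ℝ) : ℝ := if 0 < x then 1 else 0

namespace Stmt9Aux

open Set Filter

lemma hasDerivAt_aux (X Y : ℝ) (hY : 0 < Y) (ξ : ℝ) :
    HasDerivAt (fun t => arctan ((t - X) / Y)) (Y / ((X - ξ) ^ 2 + Y ^ 2)) ξ := by
  have h := (((hasDerivAt_id ξ).sub_const X).div_const Y).arctan
  convert h using 1
  · rfl
  simp only [id]
  have h1 : (0:ℝ) < (X - ξ) ^ 2 + Y ^ 2 := by positivity
  field_simp
  ring

lemma tendsto_top (X Y : ℝ) (hY : 0 < Y) :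
    Tendsto (fun t => arctan ((t - X) / Y)) atTop (nhds (π / 2)) := by
  have h : Tendsto (fun t : ℝ => (t - X) / Y) atTop atTop := by
    apply Tendsto.atTop_div_const hY
    simpa [sub_eq_add_neg] using tendsto_atTop_add_const_right atTop (-X) tendsto_id
  exact (tendsto_nhds_of_tendsto_nhdsWithin tendsto_arctan_atTop).comp h

lemma tendsto_bot (X Y : ℝ) (hY : 0 < Y) :
    Tendsto (fun t => arctan ((t - X) / Y)) atBot (nhds (-(π / 2))) := by
  have h : Tendsto (fun t : ℝ => (t - X) / Y) atBot atBot := by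
    apply Tendsto.atBot_div_const hY
    simpa [sub_eq_add_neg] using tendsto_atBot_add_const_right atBot (-X) tendsto_id
  exact (tendsto_nhds_of_tendsto_nhdsWithin tendsto_arctan_atBot).comp h

lemma integrable_kernel (X Y : ℝ) (hY : 0 < Y) :
    Integrable (fun ξ : ℝ => Y / ((X - ξ) ^ 2 + Y ^ 2)) := by
  have h1 : Integrable (fun u : ℝ => (1 + (u / Y) ^ 2)⁻¹) :=
    integrable_inv_one_add_sq.comp_div hY.ne'
  have h2 : Integrable (fun ξ : ℝ => (1 + ((ξ - X) / Y) ^ 2)⁻¹) := h1.comp_sub_right X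
  refine (h2.const_mul (Y⁻¹)).congr (Filter.Eventually.of_forall fun ξ => ?_)
  have h3 : (0:ℝ) < (X - ξ) ^ 2 + Y ^ 2 := by positivity
  field_simp
  ring

lemma integral_kernel (X Y : ℝ) (hY : 0 < Y) :
    ∫ ξ : ℝ, Y / ((X - ξ) ^ 2 + Y ^ 2) = π := by
  rw [integral_of_hasDerivAt_of_tendsto (hasDerivAt_aux X Y hY) (integrable_kernel X Y hY)
    (tendsto_bot X Y hY) (tendsto_top X Y hY)]
  ring

lemma integral_kernel_Ioi (X Y a : ℝ) (hY : 0 < Y) :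
    ∫ ξ in Ioi a, Y / ((X - ξ) ^ 2 + Y ^ 2) = π / 2 + arctan ((X - a) / Y) := by
  rw [integral_Ioi_of_hasDerivAt_of_tendsto' (fun ξ _ => hasDerivAt_aux X Y hY ξ)
    (integrable_kernel X Y hY).integrableOn (tendsto_top X Y hY)]
  rw [show (a - X) / Y = -((X - a) / Y) by ring, arctan_neg]
  ring

end Stmt9Aux

open Stmt9Aux Set Filter

/-- Poisson-kernel estimate for a bounded harmonic function whose boundary data
decays like a layer: `φ(x/ε, y/ε) ≤ (1/π)(π/2 + arctan((x+√ε)/y)) + C'√ε`. -/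
theorem stmt_9 :
    ∀ C : ℝ, 0 < C → ∃ C' : ℝ, 0 < C' ∧
      ∀ (φ : ℝ → ℝ → ℝ) (ε : ℝ), 0 < ε →
        (∀ x y : ℝ, 0 < y →
          φ x y = ∫ ξ : ℝ, (1 / π) * (y / ((x - ξ) ^ 2 + y ^ 2)) * φ ξ 0) →
        (∀ x : ℝ, 0 ≤ φ x 0 ∧ φ x 0 ≤ 1) →
        (∀ x : ℝ, Real.sqrt ε ≤ |x| → |φ x 0 - Heav x| ≤ C * ε / |x|) →
        ∀ x y : ℝ, 0 < y →
          φ (x / ε) (y / ε)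
            ≤ (1 / π) * (π / 2 + arctan ((x + Real.sqrt ε) / y)) + C' * Real.sqrt ε := by
  intro C hC
  refine ⟨C + 1, by linarith, ?_⟩
  intro φ ε hε hrep hbd hdec x y hy
  set X : ℝ := x / ε with hXdef
  set Y : ℝ := y / ε with hYdef
  have hY : 0 < Y := div_pos hy hε
  have hrε : 0 < Real.sqrt ε := Real.sqrt_pos.mpr hε
  have hπ : (0:ℝ) < π := Real.pi_pos
  set P : ℝ → ℝ := fun ξ => (1 / π) * (Y / ((X - ξ) ^ 2 + Y ^ 2)) with hPdef
  have hPpos : ∀ ξ : ℝ, 0 < P ξ := by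
    intro ξ
    have : (0:ℝ) < (X - ξ) ^ 2 + Y ^ 2 := by positivity
    positivity
  have hPint : Integrable P := (integrable_kernel X Y hY).const_mul (1 / π)
  have hPtotal : ∫ ξ : ℝ, P ξ = 1 := by
    rw [hPdef]
    rw [integral_const_mul, integral_kernel X Y hY]
    field_simp
  have harc : -(π / 2) < arctan ((x + Real.sqrt ε) / y) := neg_pi_div_two_lt_arctan _
  have hRHS0 : 0 < (1 / π) * (π / 2 + arctan ((x + Real.sqrt ε) / y)) := by
    apply mul_pos (by positivity); linarith
  rw [hrep X Y hY]
  by_cases hε1 : ε ≤ 1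
  · -- main case: ε ≤ 1
    set s : ℝ := Real.sqrt ε / ε with hsdef
    have hs : 0 < s := div_pos hrε hε
    have hεsq : Real.sqrt ε * Real.sqrt ε = ε := Real.mul_self_sqrt hε.le
    set c : ℝ := C * ε * Real.sqrt ε with hcdef
    have hc : 0 ≤ c := by positivity
    set g : ℝ → ℝ := fun ξ => (Ioi (-s)).indicator P ξ + c * P ξ with hgdef
    have hgint : Integrable g := (hPint.indicator measurableSet_Ioi).add (hPint.const_mul c)
    have hfg : ∀ ξ : ℝ, (1 / π) * (Y / ((X - ξ) ^ 2 + Y ^ 2)) * φ ξ 0 ≤ g ξ := by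
      intro ξ
      have hPξ := hPpos ξ
      show P ξ * φ ξ 0 ≤ g ξ
      by_cases hξ : -s < ξ
      · rw [hgdef]
        simp only [indicator_of_mem (mem_Ioi.mpr hξ)]
        nlinarith [(hbd ξ).2, (hbd ξ).1]
      · push_neg at hξ
        rw [hgdef]
        simp only [indicator_of_notMem (fun h => hξ.not_gt (mem_Ioi.mp h))]
        have hξneg : ξ < 0 := lt_of_le_of_lt hξ (by linarith)
        have habs : |ξ| = -ξ := abs_of_neg hξneg
        have habs_ge : s ≤ |ξ| := by rw [habs]; linarith
        have hsge : Real.sqrt ε ≤ s := by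
          rw [hsdef, le_div_iff₀ hε]
          nlinarith
        have hHeav : Heav ξ = 0 := by simp [Heav, not_lt.mpr hξneg.le]
        have hdecξ := hdec ξ (le_trans hsge habs_ge)
        rw [hHeav, sub_zero] at hdecξ
        have hφle : φ ξ 0 ≤ C * ε / |ξ| := le_trans (le_abs_self _) hdecξ
        have habspos : 0 < |ξ| := abs_pos.mpr hξneg.ne
        have hkey : C * ε / |ξ| ≤ c := by
          rw [div_le_iff₀ habspos, hcdef]
          have h1 : 1 ≤ Real.sqrt ε * |ξ| := by
            have : Real.sqrt ε * s ≤ Real.sqrt ε * |ξ| :=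
              mul_le_mul_of_nonneg_left habs_ge hrε.le
            have h2 : Real.sqrt ε * s = 1 := by
              rw [hsdef]; field_simp
              exact Real.sq_sqrt hε.le
            linarith
          nlinarith
        have : φ ξ 0 ≤ c := le_trans hφle hkey
        have h0 : 0 ≤ φ ξ 0 := (hbd ξ).1
        nlinarith
    have hmono : (∫ ξ : ℝ, (1 / π) * (Y / ((X - ξ) ^ 2 + Y ^ 2)) * φ ξ 0) ≤ ∫ ξ : ℝ, g ξ := by
      apply integral_mono_of_nonneg
      · exact Eventually.of_forall fun ξ => mul_nonneg (hPpos ξ).le (hbd ξ).1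
      · exact hgint
      · exact Eventually.of_forall hfg
    have hgval : (∫ ξ : ℝ, g ξ) =
        (1 / π) * (π / 2 + arctan ((X + s) / Y)) + c := by
      rw [hgdef]
      rw [integral_add (hPint.indicator measurableSet_Ioi) (hPint.const_mul c)]
      rw [integral_indicator measurableSet_Ioi]
      have h1 : ∫ ξ in Ioi (-s), P ξ = (1 / π) * (π / 2 + arctan ((X + s) / Y)) := by
        rw [hPdef, integral_const_mul, integral_kernel_Ioi X Y (-s) hY, sub_neg_eq_add]
      have h2 : ∫ ξ : ℝ, c * P ξ = c := by
        rw [integral_const_mul, hPtotal, mul_one]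
      rw [h1, h2]
    have hfrac : (X + s) / Y = (x + Real.sqrt ε) / y := by
      rw [hXdef, hYdef, hsdef]
      field_simp
    have hcfin : c ≤ (C + 1) * Real.sqrt ε := by
      rw [hcdef]
      nlinarith
    rw [hfrac] at hgval
    linarith [hmono, hgval.le]
  · -- ε > 1
    push_neg at hε1
    have h1 : (∫ ξ : ℝ, (1 / π) * (Y / ((X - ξ) ^ 2 + Y ^ 2)) * φ ξ 0) ≤ ∫ ξ : ℝ, P ξ := by
      apply integral_mono_of_nonneg
      · exact Eventually.of_forall fun ξ => mul_nonneg (hPpos ξ).le (hbd ξ).1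
      · exact hPint
      · refine Eventually.of_forall fun ξ => ?_
        have h := hPpos ξ
        show P ξ * φ ξ 0 ≤ P ξ
        nlinarith [(hbd ξ).2]
    have hsqrt1 : 1 ≤ Real.sqrt ε := by
      rw [show (1:ℝ) = Real.sqrt 1 by simp]
      exact Real.sqrt_le_sqrt hε1.le
    have : (1:ℝ) ≤ (C + 1) * Real.sqrt ε := by nlinarith
    rw [hPtotal] at h1
    linarith
end

section
/- Suppose ψ is harmonic and bounded in the open upper half-plane, continuous up to the boundary, and there is C > 0 with -C·∂_x Φ(x,0) ≤ ψ(x,0) ≤ C·∂_x Φ(x,0) for all x ∈ ℝ, where Φ(x,y) = (1/π)·arctan(x/(y+1)) + 1/2 and ψ(x,y) → 0 as |(x,y)| → ∞. Then |ψ(x,y)| ≤ C·∂_x Φ(x,y) = (C/π)·(y+1)/(x²+(y+1)²) for all (x,y) with y ≥ 0; in particular |ψ(x,y)| ≤ C'/y for y ≥ 1. -/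
open Real

open Filter Set Topology

noncomputable def Pfun (x y : ℝ) : ℝ := (y + 1) / (x ^ 2 + (y + 1) ^ 2)

lemma Pden_pos {x y : ℝ} (hy : (0:ℝ) < y + 1) : 0 < x ^ 2 + (y + 1) ^ 2 := by positivity

lemma second_deriv_nonpos {g : ℝ → ℝ} {t0 : ℝ}
    (hmax : IsLocalMax g t0)
    (hg : ∀ᶠ t in 𝓝 t0, DifferentiableAt ℝ g t)
    (hg2 : DifferentiableAt ℝ (deriv g) t0) :
    deriv (deriv g) t0 ≤ 0 := by
  by_contra hL
  push_neg at hL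
  have h0 : deriv g t0 = 0 := hmax.deriv_eq_zero
  have hslope : Tendsto (slope (deriv g) t0) (𝓝[≠] t0) (𝓝 (deriv (deriv g) t0)) :=
    hasDerivAt_iff_tendsto_slope.1 hg2.hasDerivAt
  have hslope' : Tendsto (slope (deriv g) t0) (𝓝[>] t0) (𝓝 (deriv (deriv g) t0)) :=
    hslope.mono_left (nhdsWithin_mono _ (fun t ht => ne_of_gt ht))
  have hpos : ∀ᶠ t in 𝓝[>] t0, 0 < deriv g t := by
    filter_upwards [hslope'.eventually (eventually_gt_nhds hL), self_mem_nhdsWithin]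
      with t hts ht
    have h1 : (0:ℝ) < t - t0 := sub_pos.2 ht
    have h2 : 0 < slope (deriv g) t0 t * (t - t0) := mul_pos hts h1
    rw [slope_def_field, h0, sub_zero, div_mul_cancel₀ _ h1.ne'] at h2
    exact h2
  -- get an interval (t0, a) where deriv g > 0 and g is differentiable, and g ≤ g t0 near t0
  have hgnb : ∀ᶠ t in 𝓝[>] t0, 0 < deriv g t ∧ DifferentiableAt ℝ g t :=
    hpos.and (hg.filter_mono nhdsWithin_le_nhds)
  obtain ⟨a, ha, hIoo⟩ := (mem_nhdsGT_iff_exists_Ioo_subset).1 hgnb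
  obtain ⟨b, hb, hIoo2⟩ := (mem_nhdsGT_iff_exists_Ioo_subset).1
    ((hmax.filter_mono nhdsWithin_le_nhds : ∀ᶠ t in 𝓝[>] t0, g t ≤ g t0))
  set c := min a b with hc
  have hct0 : t0 < c := lt_min (mem_Ioi.1 ha) (mem_Ioi.1 hb)
  set t1 := (t0 + c) / 2 with ht1
  have h1 : t0 < t1 := by simp [ht1]; linarith
  have h2 : t1 < c := by simp [ht1]; linarith
  have hmem : ∀ t ∈ Ioo t0 t1, 0 < deriv g t ∧ DifferentiableAt ℝ g t := fun t ht =>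
    hIoo ⟨ht.1, lt_of_lt_of_le (ht.2.trans h2) (min_le_left a b)⟩
  have hcont : ContinuousOn g (Icc t0 t1) := by
    intro t ht
    rcases eq_or_lt_of_le ht.1 with rfl | h
    · exact (hg.self_of_nhds).continuousAt.continuousWithinAt
    · rcases eq_or_lt_of_le ht.2 with rfl | h'
      · exact (hIoo ⟨h1, h2.trans_le (min_le_left a b)⟩).2.continuousAt.continuousWithinAt
      · exact ((hmem t ⟨h, h'⟩).2).continuousAt.continuousWithinAt
  have hmono : StrictMonoOn g (Icc t0 t1) := by
    apply strictMonoOn_of_deriv_pos (convex_Icc _ _) hcont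
    intro t ht
    rw [interior_Icc] at ht
    exact (hmem t ht).1
  have : g t0 < g t1 := hmono (left_mem_Icc.2 h1.le) (right_mem_Icc.2 h1.le) h1
  have : g t1 ≤ g t0 := hIoo2 ⟨h1, h2.trans_le (min_le_right a b)⟩
  linarith

lemma halfdisk_max (u : ℝ → ℝ → ℝ) (R : ℝ) (hR : 0 < R)
    (hc : ContinuousOn (fun p : ℝ × ℝ => u p.1 p.2) {p | 0 ≤ p.2 ∧ p.1^2 + p.2^2 ≤ R^2})
    (hdx : ∀ y : ℝ, 0 < y → ∀ x : ℝ, DifferentiableAt ℝ (fun t => u t y) x)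
    (hdx2 : ∀ y : ℝ, 0 < y → ∀ x : ℝ, DifferentiableAt ℝ (deriv fun t => u t y) x)
    (hdy : ∀ x y : ℝ, 0 < y → DifferentiableAt ℝ (fun t => u x t) y)
    (hdy2 : ∀ x y : ℝ, 0 < y → DifferentiableAt ℝ (deriv fun t => u x t) y)
    (hsub : ∀ x y : ℝ, 0 < y → x^2 + y^2 < R^2 →
      0 < deriv (fun x' => deriv (fun t => u t y) x') x
          + deriv (fun y' => deriv (fun t => u x t) y') y)
    (m : ℝ)
    (hb : ∀ x y : ℝ, 0 ≤ y → x^2 + y^2 ≤ R^2 → (y = 0 ∨ x^2 + y^2 = R^2) → u x y ≤ m) :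
    ∀ x y : ℝ, 0 ≤ y → x^2 + y^2 ≤ R^2 → u x y ≤ m := by
  set K : Set (ℝ × ℝ) := {p | 0 ≤ p.2 ∧ p.1^2 + p.2^2 ≤ R^2} with hK
  have hKclosed : IsClosed K := by
    apply IsClosed.inter
    · exact isClosed_le continuous_const continuous_snd
    · exact isClosed_le ((continuous_fst.pow 2).add (continuous_snd.pow 2)) continuous_const
  have hKsub : K ⊆ Metric.closedBall (0 : ℝ × ℝ) R := by
    rintro ⟨x, y⟩ ⟨hy, hxy⟩
    simp only [Set.mem_setOf_eq] at hxy hy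
    rw [Metric.mem_closedBall, dist_zero_right, Prod.norm_def, max_le_iff]
    dsimp only at hy hxy ⊢
    constructor <;> rw [Real.norm_eq_abs, abs_le] <;> constructor <;> nlinarith
  have hKcomp : IsCompact K :=
    (isCompact_closedBall (0 : ℝ × ℝ) R).of_isClosed_subset hKclosed hKsub
  have hKne : K.Nonempty := ⟨(0, 0), by constructor <;> simp <;> positivity⟩
  obtain ⟨p, hpK, hpmax⟩ := hKcomp.exists_isMaxOn hKne hc
  obtain ⟨x0, y0⟩ := p
  rcases eq_or_lt_of_le hpK.1 with hy0 | hy0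
  · -- boundary case y0 = 0
    intro x y hy hxy
    exact le_trans (hpmax (show (x,y) ∈ K from ⟨hy, hxy⟩)) (hb x0 y0 hpK.1 hpK.2 (Or.inl hy0.symm))
  rcases eq_or_lt_of_le hpK.2 with hr0 | hr0
  · intro x y hy hxy
    exact le_trans (hpmax (show (x,y) ∈ K from ⟨hy, hxy⟩)) (hb x0 y0 hpK.1 hpK.2 (Or.inr hr0))
  -- interior maximum: contradiction
  exfalso
  have hU : IsOpen {p : ℝ × ℝ | 0 < p.2 ∧ p.1^2 + p.2^2 < R^2} := by
    apply IsOpen.inter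
    · exact isOpen_lt continuous_const continuous_snd
    · exact isOpen_lt ((continuous_fst.pow 2).add (continuous_snd.pow 2)) continuous_const
  have hKnhds : K ∈ 𝓝 ((x0, y0) : ℝ × ℝ) :=
    mem_nhds_iff.2 ⟨_, fun q hq => ⟨hq.1.le, hq.2.le⟩, hU, ⟨hy0, hr0⟩⟩
  have hloc : IsLocalMax (fun p : ℝ × ℝ => u p.1 p.2) (x0, y0) := hpmax.isLocalMax hKnhds
  have hlx : IsLocalMax (fun t => u t y0) x0 := by
    have ht : Tendsto (fun t : ℝ => ((t, y0) : ℝ × ℝ)) (𝓝 x0) (𝓝 (x0, y0)) :=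
      (continuous_id.prodMk continuous_const).tendsto x0
    exact ht.eventually hloc
  have hly : IsLocalMax (fun t => u x0 t) y0 := by
    have ht : Tendsto (fun t : ℝ => ((x0, t) : ℝ × ℝ)) (𝓝 y0) (𝓝 (x0, y0)) :=
      (continuous_const.prodMk continuous_id).tendsto y0
    exact ht.eventually hloc
  have h1 : deriv (fun x' => deriv (fun t => u t y0) x') x0 ≤ 0 :=
    second_deriv_nonpos hlx (Eventually.of_forall (hdx y0 hy0)) (hdx2 y0 hy0 x0)
  have h2 : deriv (fun y' => deriv (fun t => u x0 t) y') y0 ≤ 0 := by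
    apply second_deriv_nonpos hly _ (hdy2 x0 y0 hy0)
    filter_upwards [Ioi_mem_nhds hy0] with t ht
    exact hdy x0 t ht
  linarith [hsub x0 y0 hy0 hr0]

lemma hasDerivAt_P_x {y : ℝ} (hy : (0:ℝ) < y + 1) (x : ℝ) :
    HasDerivAt (fun t => Pfun t y) (-2 * (y + 1) * x / (x ^ 2 + (y + 1) ^ 2) ^ 2) x := by
  have hd : HasDerivAt (fun t : ℝ => t ^ 2 + (y + 1) ^ 2) (2 * x) x := by
    simpa using (hasDerivAt_pow 2 x).add_const ((y + 1) ^ 2)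
  have h := (hasDerivAt_const x (y + 1)).fun_div hd (Pden_pos (x := x) hy).ne'
  refine h.congr_deriv ?_
  field_simp
  ring

lemma hasDerivAt_P_y {x y : ℝ} (hy : (0:ℝ) < y + 1) :
    HasDerivAt (fun t => Pfun x t) ((x ^ 2 - (y + 1) ^ 2) / (x ^ 2 + (y + 1) ^ 2) ^ 2) y := by
  have hn : HasDerivAt (fun t : ℝ => t + 1) 1 y := (hasDerivAt_id y).add_const 1
  have hd : HasDerivAt (fun t : ℝ => x ^ 2 + (t + 1) ^ 2) (2 * (y + 1)) y := by
    have := (hn.pow 2).const_add (x ^ 2)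
    simpa using this
  have h := hn.fun_div hd (Pden_pos (x := x) hy).ne'
  refine h.congr_deriv ?_
  field_simp
  ring

lemma hasDerivAt_P_x2 {y : ℝ} (hy : (0:ℝ) < y + 1) (x : ℝ) :
    HasDerivAt (fun x' => -2 * (y + 1) * x' / (x' ^ 2 + (y + 1) ^ 2) ^ 2)
      (-2 * (y + 1) * ((y + 1) ^ 2 - 3 * x ^ 2) / (x ^ 2 + (y + 1) ^ 2) ^ 3) x := by
  have hn : HasDerivAt (fun t : ℝ => -2 * (y + 1) * t) (-2 * (y + 1)) x := by
    simpa using (hasDerivAt_id x).const_mul (-2 * (y + 1))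
  have hd : HasDerivAt (fun t : ℝ => (t ^ 2 + (y + 1) ^ 2) ^ 2)
      (2 * (x ^ 2 + (y + 1) ^ 2) * (2 * x)) x := by
    have h1 : HasDerivAt (fun t : ℝ => t ^ 2 + (y + 1) ^ 2) (2 * x) x := by
      simpa using (hasDerivAt_pow 2 x).add_const ((y + 1) ^ 2)
    simpa using (h1.fun_pow 2)
  have hden : (x ^ 2 + (y + 1) ^ 2) ^ 2 ≠ 0 := pow_ne_zero _ (Pden_pos (x := x) hy).ne'
  have h := hn.fun_div hd hden
  refine h.congr_deriv ?_
  have hD := (Pden_pos (x := x) hy)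
  field_simp
  ring

lemma hasDerivAt_P_y2 {x y : ℝ} (hy : (0:ℝ) < y + 1) :
    HasDerivAt (fun y' => (x ^ 2 - (y' + 1) ^ 2) / (x ^ 2 + (y' + 1) ^ 2) ^ 2)
      (2 * (y + 1) * ((y + 1) ^ 2 - 3 * x ^ 2) / (x ^ 2 + (y + 1) ^ 2) ^ 3) y := by
  have h1 : HasDerivAt (fun t : ℝ => t + 1) 1 y := (hasDerivAt_id y).add_const 1
  have hn : HasDerivAt (fun t : ℝ => x ^ 2 - (t + 1) ^ 2) (-(2 * (y + 1))) y := by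
    have h2 := (hasDerivAt_const y (x ^ 2)).fun_sub (h1.fun_pow 2)
    simpa using h2
  have hd : HasDerivAt (fun t : ℝ => (x ^ 2 + (t + 1) ^ 2) ^ 2)
      (2 * (x ^ 2 + (y + 1) ^ 2) * (2 * (y + 1))) y := by
    have h2 : HasDerivAt (fun t : ℝ => x ^ 2 + (t + 1) ^ 2) (2 * (y + 1)) y := by
      simpa using (h1.pow 2).const_add (x ^ 2)
    simpa using h2.fun_pow 2
  have hden : (x ^ 2 + (y + 1) ^ 2) ^ 2 ≠ 0 := pow_ne_zero _ (Pden_pos (x := x) hy).ne'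
  have h := hn.fun_div hd hden
  refine h.congr_deriv ?_
  have hD := Pden_pos (x := x) hy
  field_simp
  ring

section
variable {ψ : ℝ → ℝ → ℝ}

lemma psi_line_x (hreg : ContDiffOn ℝ 2 (fun p : ℝ × ℝ => ψ p.1 p.2) {p : ℝ × ℝ | 0 < p.2})
    {y : ℝ} (hy : 0 < y) : ContDiff ℝ 2 (fun t => ψ t y) := by
  rw [← contDiffOn_univ]
  have hL : ContDiffOn ℝ 2 (fun t : ℝ => ((t, y) : ℝ × ℝ)) univ :=
    (contDiff_id.prodMk contDiff_const).contDiffOn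
  exact hreg.comp hL (fun t _ => hy)

lemma psi_line_y (hreg : ContDiffOn ℝ 2 (fun p : ℝ × ℝ => ψ p.1 p.2) {p : ℝ × ℝ | 0 < p.2})
    (x : ℝ) : ContDiffOn ℝ 2 (fun t => ψ x t) (Ioi 0) := by
  have hL : ContDiffOn ℝ 2 (fun t : ℝ => ((x, t) : ℝ × ℝ)) (Ioi 0) :=
    (contDiff_const.prodMk contDiff_id).contDiffOn
  exact hreg.comp hL (fun t ht => ht)

lemma psi_diff_x (hreg : ContDiffOn ℝ 2 (fun p : ℝ × ℝ => ψ p.1 p.2) {p : ℝ × ℝ | 0 < p.2})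
    {y : ℝ} (hy : 0 < y) (x : ℝ) : DifferentiableAt ℝ (fun t => ψ t y) x :=
  ((psi_line_x hreg hy).differentiable (by norm_num)).differentiableAt

lemma psi_diff2_x (hreg : ContDiffOn ℝ 2 (fun p : ℝ × ℝ => ψ p.1 p.2) {p : ℝ × ℝ | 0 < p.2})
    {y : ℝ} (hy : 0 < y) (x : ℝ) : DifferentiableAt ℝ (deriv fun t => ψ t y) x := by
  have h := ((psi_line_x hreg hy).contDiffOn (s := univ)).deriv_of_isOpen isOpen_univ
    (by norm_num : (1:WithTop ℕ∞) + 1 ≤ 2)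
  exact ((h.differentiableOn (by norm_num)).differentiableAt (by simp))

lemma psi_diff_y (hreg : ContDiffOn ℝ 2 (fun p : ℝ × ℝ => ψ p.1 p.2) {p : ℝ × ℝ | 0 < p.2})
    (x : ℝ) {y : ℝ} (hy : 0 < y) : DifferentiableAt ℝ (fun t => ψ x t) y :=
  ((psi_line_y hreg x).differentiableOn (by norm_num)).differentiableAt
    (isOpen_Ioi.mem_nhds hy)

lemma psi_diff2_y (hreg : ContDiffOn ℝ 2 (fun p : ℝ × ℝ => ψ p.1 p.2) {p : ℝ × ℝ | 0 < p.2})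
    (x : ℝ) {y : ℝ} (hy : 0 < y) : DifferentiableAt ℝ (deriv fun t => ψ x t) y := by
  have h := (psi_line_y hreg x).deriv_of_isOpen isOpen_Ioi
    (by norm_num : (1:WithTop ℕ∞) + 1 ≤ 2)
  exact (h.differentiableOn (by norm_num)).differentiableAt (isOpen_Ioi.mem_nhds hy)

end

lemma Pfun_nonneg {x y : ℝ} (hy : 0 ≤ y) : 0 ≤ Pfun x y := by
  unfold Pfun
  apply div_nonneg (by linarith)
  positivity

lemma Pfun_contOn : ContinuousOn (fun p : ℝ × ℝ => Pfun p.1 p.2) {p : ℝ × ℝ | 0 ≤ p.2} := by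
  apply ContinuousOn.div
  · exact (continuous_snd.add continuous_const).continuousOn
  · exact ((continuous_fst.pow 2).add ((continuous_snd.add continuous_const).pow 2)).continuousOn
  · rintro ⟨x, y⟩ hy
    simp only [Set.mem_setOf_eq] at hy ⊢
    nlinarith

lemma one_side (ψ : ℝ → ℝ → ℝ) (c : ℝ) (hc : 0 < c)
    (hreg : ContDiffOn ℝ 2 (fun p : ℝ × ℝ => ψ p.1 p.2) {p : ℝ × ℝ | 0 < p.2})
    (hharm : ∀ x y : ℝ, 0 < y →
      deriv (fun x' => deriv (fun x'' => ψ x'' y) x') x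
        + deriv (fun y' => deriv (fun y'' => ψ x y'') y') y = 0)
    (hcont : Continuous (fun p : ℝ × ℝ => ψ p.1 p.2))
    (hb0 : ∀ x : ℝ, ψ x 0 ≤ c * Pfun x 0)
    (hinf : ∀ δ : ℝ, 0 < δ → ∃ Rr : ℝ, ∀ x y : ℝ, 0 ≤ y →
      Rr ≤ Real.sqrt (x ^ 2 + y ^ 2) → |ψ x y| ≤ δ) :
    ∀ x y : ℝ, 0 ≤ y → ψ x y ≤ c * Pfun x y := by
  intro x0 y0 hy0
  rcases eq_or_lt_of_le hy0 with h | hy0pos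
  · rw [← h]; exact hb0 x0
  -- reduce to: for all δ > 0
  apply le_of_forall_pos_le_add
  intro δ hδ
  obtain ⟨Rr, hRr⟩ := hinf δ hδ
  set R := max Rr (|x0| + y0 + 1) with hRdef
  have hR1 : (1:ℝ) ≤ R := le_trans (by linarith [abs_nonneg x0]) (le_max_right _ _)
  have hR0 : (0:ℝ) < R := by linarith
  have hin : x0 ^ 2 + y0 ^ 2 ≤ R ^ 2 := by
    have h2 : |x0| + y0 + 1 ≤ R := le_max_right _ _
    nlinarith [abs_nonneg x0, sq_abs x0]
  have key : ∀ ε : ℝ, 0 < ε →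
      ψ x0 y0 - c * Pfun x0 y0 + ε * (x0 ^ 2 + y0 ^ 2) ≤ δ + ε * R ^ 2 := by
    intro ε hε
    have H := halfdisk_max (fun x y => ψ x y - c * Pfun x y + ε * (x ^ 2 + y ^ 2)) R hR0
      ?_ ?_ ?_ ?_ ?_ ?_ (δ + ε * R ^ 2) ?_ x0 y0 hy0 hin
    · exact H
    · -- continuity
      apply ContinuousOn.add
      · apply ContinuousOn.sub hcont.continuousOn
        exact continuousOn_const.mul (Pfun_contOn.mono (fun p hp => hp.1))
      · exact (continuous_const.mul
          ((continuous_fst.pow 2).add (continuous_snd.pow 2))).continuousOn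
    · -- diff x
      intro y hy x
      have h1 : (0:ℝ) < y + 1 := by linarith
      apply DifferentiableAt.add
      · exact (psi_diff_x hreg hy x).sub ((hasDerivAt_P_x h1 x).differentiableAt.const_mul c)
      · exact (((differentiableAt_id.pow 2).add_const (y ^ 2)).const_mul ε)
    · -- diff2 x
      intro y hy x
      have h1 : (0:ℝ) < y + 1 := by linarith
      have he : (deriv fun t => ψ t y - c * Pfun t y + ε * (t ^ 2 + y ^ 2))
          = fun x' => deriv (fun t => ψ t y) x'
            - c * (-2 * (y + 1) * x' / (x' ^ 2 + (y + 1) ^ 2) ^ 2) + ε * (2 * x') := by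
        funext x'
        have hψ := psi_diff_x hreg hy x'
        have hP := (hasDerivAt_P_x h1 x').const_mul c
        have hq : HasDerivAt (fun t : ℝ => ε * (t ^ 2 + y ^ 2)) (ε * (2 * x')) x' := by
          simpa using ((hasDerivAt_pow 2 x').add_const (y ^ 2)).const_mul ε
        rw [deriv_fun_add (hψ.fun_sub hP.differentiableAt) hq.differentiableAt,
          deriv_fun_sub hψ hP.differentiableAt, hP.deriv, hq.deriv]
      beta_reduce
      rw [he]
      apply DifferentiableAt.add
      · exact (psi_diff2_x hreg hy x).sub
          ((hasDerivAt_P_x2 h1 x).differentiableAt.const_mul c)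
      · exact (differentiableAt_id.const_mul 2).const_mul ε
    · -- diff y
      intro x y hy
      have h1 : (0:ℝ) < y + 1 := by linarith
      apply DifferentiableAt.add
      · exact (psi_diff_y hreg x hy).sub ((hasDerivAt_P_y h1).differentiableAt.const_mul c)
      · exact ((differentiableAt_const _).add (differentiableAt_id.pow 2)).const_mul ε
    · -- diff2 y
      intro x y hy
      have he : (fun y' => deriv (fun t => ψ x t - c * Pfun x t + ε * (x ^ 2 + t ^ 2)) y')
          =ᶠ[𝓝 y] fun y' => deriv (fun t => ψ x t) y'
            - c * ((x ^ 2 - (y' + 1) ^ 2) / (x ^ 2 + (y' + 1) ^ 2) ^ 2) + ε * (2 * y') := by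
        filter_upwards [Ioi_mem_nhds hy] with t ht
        have htpos : (0:ℝ) < t := ht
        have h1 : (0:ℝ) < t + 1 := by linarith
        have hψ := psi_diff_y hreg x htpos
        have hP := (hasDerivAt_P_y (x := x) h1).const_mul c
        have hq : HasDerivAt (fun s : ℝ => ε * (x ^ 2 + s ^ 2)) (ε * (2 * t)) t := by
          simpa using (((hasDerivAt_pow 2 t).const_add (x ^ 2))).const_mul ε
        rw [deriv_fun_add (hψ.fun_sub hP.differentiableAt) hq.differentiableAt,
          deriv_fun_sub hψ hP.differentiableAt, hP.deriv, hq.deriv]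
      beta_reduce
      rw [EventuallyEq.differentiableAt_iff he]
      have h1 : (0:ℝ) < y + 1 := by linarith
      apply DifferentiableAt.add
      · exact (psi_diff2_y hreg x hy).sub
          ((hasDerivAt_P_y2 (x := x) h1).differentiableAt.const_mul c)
      · exact (differentiableAt_id.const_mul 2).const_mul ε
    · -- subharmonicity
      intro x y hy hlt
      have h1 : (0:ℝ) < y + 1 := by linarith
      -- x direction second derivative
      have hex : (fun x' => deriv (fun t => ψ t y - c * Pfun t y + ε * (t ^ 2 + y ^ 2)) x')
          = fun x' => deriv (fun t => ψ t y) x'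
            - c * (-2 * (y + 1) * x' / (x' ^ 2 + (y + 1) ^ 2) ^ 2) + ε * (2 * x') := by
        funext x'
        have hψ := psi_diff_x hreg hy x'
        have hP := (hasDerivAt_P_x h1 x').const_mul c
        have hq : HasDerivAt (fun t : ℝ => ε * (t ^ 2 + y ^ 2)) (ε * (2 * x')) x' := by
          simpa using ((hasDerivAt_pow 2 x').add_const (y ^ 2)).const_mul ε
        rw [deriv_fun_add (hψ.fun_sub hP.differentiableAt) hq.differentiableAt,
          deriv_fun_sub hψ hP.differentiableAt, hP.deriv, hq.deriv]
      have hx2 : deriv (fun x' =>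
            deriv (fun t => ψ t y - c * Pfun t y + ε * (t ^ 2 + y ^ 2)) x') x
          = deriv (fun x' => deriv (fun t => ψ t y) x') x
            - c * (-2 * (y + 1) * ((y + 1) ^ 2 - 3 * x ^ 2) / (x ^ 2 + (y + 1) ^ 2) ^ 3)
            + ε * 2 := by
        rw [hex]
        have hψ2 := psi_diff2_x hreg hy x
        have hP2 := (hasDerivAt_P_x2 h1 x).const_mul c
        have hq2 : HasDerivAt (fun x' : ℝ => ε * (2 * x')) (ε * 2) x := by
          simpa using ((hasDerivAt_id x).const_mul 2).const_mul ε
        rw [deriv_fun_add (hψ2.fun_sub hP2.differentiableAt) hq2.differentiableAt,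
          deriv_fun_sub hψ2 hP2.differentiableAt, hP2.deriv, hq2.deriv]
      -- y direction second derivative
      have hey : (fun y' => deriv (fun t => ψ x t - c * Pfun x t + ε * (x ^ 2 + t ^ 2)) y')
          =ᶠ[𝓝 y] fun y' => deriv (fun t => ψ x t) y'
            - c * ((x ^ 2 - (y' + 1) ^ 2) / (x ^ 2 + (y' + 1) ^ 2) ^ 2) + ε * (2 * y') := by
        filter_upwards [Ioi_mem_nhds hy] with t ht
        have htpos : (0:ℝ) < t := ht
        have h1' : (0:ℝ) < t + 1 := by linarith
        have hψ := psi_diff_y hreg x htpos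
        have hP := (hasDerivAt_P_y (x := x) h1').const_mul c
        have hq : HasDerivAt (fun s : ℝ => ε * (x ^ 2 + s ^ 2)) (ε * (2 * t)) t := by
          simpa using (((hasDerivAt_pow 2 t).const_add (x ^ 2))).const_mul ε
        rw [deriv_fun_add (hψ.fun_sub hP.differentiableAt) hq.differentiableAt,
          deriv_fun_sub hψ hP.differentiableAt, hP.deriv, hq.deriv]
      have hy2 : deriv (fun y' =>
            deriv (fun t => ψ x t - c * Pfun x t + ε * (x ^ 2 + t ^ 2)) y') y
          = deriv (fun y' => deriv (fun t => ψ x t) y') y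
            - c * (2 * (y + 1) * ((y + 1) ^ 2 - 3 * x ^ 2) / (x ^ 2 + (y + 1) ^ 2) ^ 3)
            + ε * 2 := by
        rw [hey.deriv_eq]
        have hψ2 := psi_diff2_y hreg x hy
        have hP2 := (hasDerivAt_P_y2 (x := x) h1).const_mul c
        have hq2 : HasDerivAt (fun y' : ℝ => ε * (2 * y')) (ε * 2) y := by
          simpa using ((hasDerivAt_id y).const_mul 2).const_mul ε
        rw [deriv_fun_add (hψ2.fun_sub hP2.differentiableAt) hq2.differentiableAt,
          deriv_fun_sub hψ2 hP2.differentiableAt, hP2.deriv, hq2.deriv]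
      rw [hx2, hy2]
      have hharm' := hharm x y hy
      have h00 : deriv (fun x' => deriv (fun t => ψ t y) x') x
          + deriv (fun y' => deriv (fun t => ψ x t) y') y = 0 := hharm'
      have hc2 : c * (-2 * (y + 1) * ((y + 1) ^ 2 - 3 * x ^ 2) / (x ^ 2 + (y + 1) ^ 2) ^ 3)
          = -(c * (2 * (y + 1) * ((y + 1) ^ 2 - 3 * x ^ 2) / (x ^ 2 + (y + 1) ^ 2) ^ 3)) := by
        ring
      rw [hc2]
      linarith [h00, hε]
    · -- boundary
      intro x y hy hxy hcase
      beta_reduce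
      rcases hcase with h0 | hr
      · subst h0
        have hb := hb0 x
        have hcP : 0 ≤ c * Pfun x 0 := mul_nonneg hc.le (Pfun_nonneg le_rfl)
        have hx2 : x ^ 2 ≤ R ^ 2 := by nlinarith
        have : ε * x ^ 2 ≤ ε * R ^ 2 := by nlinarith
        simp only [ne_eq, OfNat.ofNat_ne_zero, not_false_eq_true, zero_pow, add_zero] at *
        nlinarith
      · have hs : Real.sqrt (x ^ 2 + y ^ 2) = R := by
          rw [hr, Real.sqrt_sq hR0.le]
        have hψb : |ψ x y| ≤ δ := hRr x y hy (by rw [hs]; exact le_max_left _ _)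
        have hcP : 0 ≤ c * Pfun x y := mul_nonneg hc.le (Pfun_nonneg hy)
        have : ψ x y ≤ δ := le_trans (le_abs_self _) hψb
        nlinarith [hr]
  -- let ε → 0
  have hA : (0:ℝ) ≤ R ^ 2 - (x0 ^ 2 + y0 ^ 2) := by linarith
  set A := R ^ 2 - (x0 ^ 2 + y0 ^ 2) with hAdef
  have final : ψ x0 y0 - c * Pfun x0 y0 ≤ δ := by
    apply le_of_forall_pos_le_add
    intro ε' hε'
    have hε : 0 < ε' / (A + 1) := by positivity
    have := key (ε' / (A + 1)) hε
    have hAA : ε' / (A + 1) * A ≤ ε' := by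
      rw [div_mul_eq_mul_div, div_le_iff₀ (by linarith)]
      nlinarith
    nlinarith
  linarith

lemma derivPhi (x : ℝ) : deriv (fun x' => Phi x' 0) x = 1 / π * (1 / (1 + x ^ 2)) := by
  have hfun : (fun x' => Phi x' 0) = fun x' => 1 / π * arctan x' + 1 / 2 := by
    funext t; simp [Phi]
  rw [hfun]
  exact (((Real.hasDerivAt_arctan x).const_mul (1 / π)).add_const (1 / 2)).deriv

/-- Comparison principle: a bounded harmonic function in the half-plane, vanishing at
infinity, whose boundary values are dominated by `C·∂_x Φ(·,0)`, is dominated by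
`C·∂_x Φ = (C/π)(y+1)/(x²+(y+1)²)` everywhere; in particular it is `≤ C'/y` for `y ≥ 1`. -/
theorem stmt_15 (ψ : ℝ → ℝ → ℝ) (C : ℝ) (hC : 0 < C)
    (hreg : ContDiffOn ℝ 2 (fun p : ℝ × ℝ => ψ p.1 p.2) {p : ℝ × ℝ | 0 < p.2})
    (hharm : ∀ x y : ℝ, 0 < y →
      deriv (fun x' => deriv (fun x'' => ψ x'' y) x') x
        + deriv (fun y' => deriv (fun y'' => ψ x y'') y') y = 0)
    (hcont : Continuous (fun p : ℝ × ℝ => ψ p.1 p.2))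
    (hbdd : ∃ M : ℝ, ∀ x y : ℝ, 0 ≤ y → |ψ x y| ≤ M)
    (hbound : ∀ x : ℝ,
      -C * deriv (fun x' => Phi x' 0) x ≤ ψ x 0 ∧
      ψ x 0 ≤ C * deriv (fun x' => Phi x' 0) x)
    (hinf : ∀ δ : ℝ, 0 < δ → ∃ Rr : ℝ, ∀ x y : ℝ, 0 ≤ y →
      Rr ≤ Real.sqrt (x ^ 2 + y ^ 2) → |ψ x y| ≤ δ) :
    (∀ x y : ℝ, 0 ≤ y →
      |ψ x y| ≤ (C / π) * (y + 1) / (x ^ 2 + (y + 1) ^ 2)) ∧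
    ∃ C' : ℝ, 0 < C' ∧ ∀ x y : ℝ, 1 ≤ y → |ψ x y| ≤ C' / y := by
  have hπ : (0:ℝ) < π := pi_pos
  have hcπ : (0:ℝ) < C / π := div_pos hC hπ
  have hkey : ∀ x : ℝ, C * (1 / π * (1 / (1 + x ^ 2))) = C / π * Pfun x 0 := by
    intro x
    have hx : (0:ℝ) < 1 + x ^ 2 := by positivity
    have e : Pfun x 0 = 1 / (1 + x ^ 2) := by
      simp only [Pfun]
      norm_num [add_comm]
    rw [e]
    ring
  have h1 : ∀ x y : ℝ, 0 ≤ y → ψ x y ≤ C / π * Pfun x y := by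
    apply one_side ψ (C / π) hcπ hreg hharm hcont
    · intro x
      have := (hbound x).2
      rw [derivPhi, hkey] at this
      exact this
    · exact hinf
  have h2 : ∀ x y : ℝ, 0 ≤ y → -ψ x y ≤ C / π * Pfun x y := by
    apply one_side (fun a b => -ψ a b) (C / π) hcπ hreg.neg
    · intro x y hy
      have e1 : (fun x' => deriv (fun x'' => -ψ x'' y) x')
          = fun x' => -deriv (fun x'' => ψ x'' y) x' := by
        funext t; exact deriv.neg
      have e2 : (fun y' => deriv (fun y'' => -ψ x y'') y')
          = fun y' => -deriv (fun y'' => ψ x y'') y' := by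
        funext t; exact deriv.neg
      rw [e1, e2, deriv.fun_neg, deriv.fun_neg]
      linarith [hharm x y hy]
    · exact hcont.neg
    · intro x
      have := (hbound x).1
      rw [derivPhi] at this
      have hk := hkey x
      nlinarith [this, hk]
    · intro δ hδ
      obtain ⟨Rr, hRr⟩ := hinf δ hδ
      exact ⟨Rr, fun x y hy hR => by rw [abs_neg]; exact hRr x y hy hR⟩
  have hmain : ∀ x y : ℝ, 0 ≤ y →
      |ψ x y| ≤ (C / π) * (y + 1) / (x ^ 2 + (y + 1) ^ 2) := by
    intro x y hy
    have he : (C / π) * (y + 1) / (x ^ 2 + (y + 1) ^ 2) = C / π * Pfun x y := by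
      unfold Pfun; rw [mul_div_assoc]
    rw [he]
    exact abs_le.2 ⟨by linarith [h2 x y hy], h1 x y hy⟩
  refine ⟨hmain, C / π, hcπ, ?_⟩
  intro x y hy1
  have hy0 : (0:ℝ) < y := by linarith
  have hD : (0:ℝ) < x ^ 2 + (y + 1) ^ 2 := by positivity
  refine le_trans (hmain x y (by linarith)) ?_
  rw [div_le_div_iff₀ hD hy0]
  have h3 : 0 ≤ (C / π) * (x ^ 2 + (y + 1)) := by positivity
  nlinarith [h3]
end
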